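/- arXiv:1811.11023 — 12 statements merged into one kernel-verified Lean document; each statement's English description precedes it below -/
import Mathlib

section
/- Let P be a finite chordal polynomial set in K[x_1,...,x_n] such that x_1 < ... < x_n is a perfect elimination ordering of G(P). Suppose that for each index i with P^(i) ≠ ∅ a nonconstant polynomial T_i is given with lv(T_i) = x_i and supp(T_i) ⊆ supp(P^(i)). Then the list T of the polynomials T_i, ordered by increasing index i, is a triangular set and G(T) ⊆ G(P). Moreover, if supp(T_i) = supp(P^(i)) for every i with P^(i) ≠ ∅, then G(T) = G(P). -/
open MvPolynomial

variable {K : Type*} [Field K] {n : ℕ}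

/-- The set of variables effectively appearing in a polynomial. -/
def psupp (F : MvPolynomial (Fin n) K) : Set (Fin n) := ↑F.vars

/-- The set of variables appearing in a set of polynomials. -/
def ssupp (P : Set (MvPolynomial (Fin n) K)) : Set (Fin n) :=
  ⋃ F ∈ P, psupp F

/-- Adjacency in the associated graph `G(P)`: `p ≠ q` and some polynomial of `P`
contains both variables. -/
def adjG (P : Set (MvPolynomial (Fin n) K)) (p q : Fin n) : Prop :=
  p ≠ q ∧ ∃ F ∈ P, p ∈ psupp F ∧ q ∈ psupp F

/-- `G(P) ⊆ G(Q)`: every edge of `G(P)` is an edge of `G(Q)`. -/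
def subG (P Q : Set (MvPolynomial (Fin n) K)) : Prop :=
  ∀ p q, adjG P p q → adjG Q p q

/-- The natural ordering `x_1 < ... < x_n` of the variables is a perfect elimination
ordering of `G(P)`; in particular `G(P)` is chordal. -/
def isPEO (P : Set (MvPolynomial (Fin n) K)) : Prop :=
  ∀ p q k : Fin n, p < k → q < k → p ≠ q → adjG P p k → adjG P q k → adjG P p q

/-- `F` is nonconstant with leading variable `x_k`. -/
def hasLv (F : MvPolynomial (Fin n) K) (k : Fin n) : Prop :=
  k ∈ psupp F ∧ ∀ j ∈ psupp F, j ≤ k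

/-- `P^(k)`: the polynomials of `P` with leading variable `x_k`. -/
def levelSet (P : Set (MvPolynomial (Fin n) K)) (k : Fin n) :
    Set (MvPolynomial (Fin n) K) :=
  {F | F ∈ P ∧ hasLv F k}

/-- A triangular set: a list of nonconstant polynomials with strictly increasing
leading variables. -/
def IsTriangularSet (L : List (MvPolynomial (Fin n) K)) : Prop :=
  (∀ F ∈ L, (psupp F).Nonempty) ∧
    L.Chain' fun F G => ∃ a b, hasLv F a ∧ hasLv G b ∧ a < b

open Classical in
/-- The list of the chosen polynomials `T i`, for those `i` with `P^(i) ≠ ∅`,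
ordered by increasing index `i`. -/
noncomputable def triList (P : Set (MvPolynomial (Fin n) K))
    (T : Fin n → MvPolynomial (Fin n) K) : List (MvPolynomial (Fin n) K) :=
  ((Finset.univ.filter fun i => (levelSet P i).Nonempty).sort (· ≤ ·)).map T

/-- for a finite chordal polynomial set `P` whose natural variable
ordering is a perfect elimination ordering, if `T i` is nonconstant with leading
variable `x_i` and `supp (T i) ⊆ supp (P^(i))` whenever `P^(i) ≠ ∅`, then the list
of the `T i` (ordered by increasing `i`) is a triangular set whose associated graph
is a subgraph of `G(P)`; and if moreover `supp (T i) = supp (P^(i))` for each such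
`i`, the two associated graphs coincide. -/
theorem statement0 {K : Type*} [Field K] {n : ℕ}
    (P : Set (MvPolynomial (Fin n) K)) (hfin : P.Finite) (hpeo : isPEO P)
    (T : Fin n → MvPolynomial (Fin n) K)
    (hlv : ∀ i, (levelSet P i).Nonempty → hasLv (T i) i)
    (hsupp : ∀ i, (levelSet P i).Nonempty → psupp (T i) ⊆ ssupp (levelSet P i)) :
    IsTriangularSet (triList P T) ∧
    subG {F | F ∈ triList P T} P ∧
    ((∀ i, (levelSet P i).Nonempty → psupp (T i) = ssupp (levelSet P i)) →
      ∀ p q, adjG {F | F ∈ triList P T} p q ↔ adjG P p q) := by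
  classical
  have hmem : ∀ i ∈ (Finset.univ.filter fun i => (levelSet P i).Nonempty).sort (· ≤ ·),
      (levelSet P i).Nonempty := by
    intro i hi
    rw [Finset.mem_sort] at hi
    exact (Finset.mem_filter.mp hi).2
  have hTmem : ∀ F ∈ triList P T, ∃ i, (levelSet P i).Nonempty ∧ T i = F := by
    intro F hF
    rw [triList, List.mem_map] at hF
    obtain ⟨i, hi, rfl⟩ := hF
    exact ⟨i, hmem i hi, rfl⟩
  have hle : ∀ i : Fin n, ∀ p, p ∈ ssupp (levelSet P i) → p ≤ i ∧ (p ≠ i → adjG P p i) := by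
    intro i p hp
    simp only [ssupp, Set.mem_iUnion, exists_prop] at hp
    obtain ⟨G, ⟨hGP, hGi, hGle⟩, hpG⟩ := hp
    exact ⟨hGle p hpG, fun h => ⟨h, G, hGP, hpG, hGi⟩⟩
  have key : ∀ p q, adjG {F | F ∈ triList P T} p q → adjG P p q := by
    rintro p q ⟨hpq, F, hF, hp, hq⟩
    obtain ⟨i, hne, rfl⟩ := hTmem F hF
    have hp' := hsupp i hne hp
    have hq' := hsupp i hne hq
    obtain ⟨hple, hpadj⟩ := hle i p hp'
    obtain ⟨hqle, hqadj⟩ := hle i q hq'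
    rcases eq_or_lt_of_le hple with rfl | hplt
    · obtain ⟨_, H, hH, hqH, hpH⟩ := hqadj (Ne.symm hpq)
      exact ⟨hpq, H, hH, hpH, hqH⟩
    · rcases eq_or_lt_of_le hqle with rfl | hqlt
      · exact hpadj hpq
      · exact hpeo p q i hplt hqlt hpq (hpadj (ne_of_lt hplt)) (hqadj (ne_of_lt hqlt))
  refine ⟨⟨?_, ?_⟩, fun p q => key p q, ?_⟩
  · intro F hF
    obtain ⟨i, hne, rfl⟩ := hTmem F hF
    exact ⟨i, (hlv i hne).1⟩
  · simp only [triList, List.Chain', List.isChain_map]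
    apply List.Pairwise.isChain
    refine List.Pairwise.imp_of_mem ?_ (Finset.sortedLT_sort _).pairwise
    intro a b ha hb hab
    exact ⟨a, b, hlv a (hmem a ha), hlv b (hmem b hb), hab⟩
  · intro heq p q
    refine ⟨key p q, ?_⟩
    rintro ⟨hpq, F, hF, hp, hq⟩
    have hnon : F.vars.Nonempty := ⟨p, hp⟩
    have hFk : F ∈ levelSet P (F.vars.max' hnon) :=
      ⟨hF, F.vars.max'_mem hnon, fun j hj => F.vars.le_max' j hj⟩
    have hne : (levelSet P (F.vars.max' hnon)).Nonempty := ⟨F, hFk⟩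
    refine ⟨hpq, T (F.vars.max' hnon), ?_, ?_, ?_⟩
    · simp only [Set.mem_setOf_eq, triList, List.mem_map]
      exact ⟨_, (Finset.mem_sort _).mpr (Finset.mem_filter.mpr ⟨Finset.mem_univ _, hne⟩), rfl⟩
    · rw [heq _ hne]
      exact Set.mem_biUnion hFk hp
    · rw [heq _ hne]
      exact Set.mem_biUnion hFk hq
end

section
/- Let P be a finite chordal polynomial set in K[x_1,...,x_n] with P^(n) ≠ ∅ such that x_1 < ... < x_n is a perfect elimination ordering of G(P). Let T be a polynomial with lv(T) = x_n and supp(T) ⊆ supp(P^(n)), and let R be a finite polynomial set with supp(R) ⊆ supp(P^(n)) \ {x_n}. Define P̃ = (P \ P^(n)) ∪ {T} ∪ R. Then G(P̃) ⊆ G(P). Moreover, if supp(T) = supp(P^(n)), then G(P̃) = G(P). -/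
open MvPolynomial

variable {K : Type*} [Field K] {n : ℕ}

lemma clique_lemma {K : Type*} [Field K] {n : ℕ}
    (P : Set (MvPolynomial (Fin (n + 1)) K)) (hpeo : isPEO P)
    {p q : Fin (n + 1)} (hp : p ∈ ssupp (levelSet P (Fin.last n)))
    (hq : q ∈ ssupp (levelSet P (Fin.last n))) (hpq : p ≠ q) : adjG P p q := by
  simp only [ssupp, Set.mem_iUnion] at hp hq
  obtain ⟨F, hF, hpF⟩ := hp
  obtain ⟨G, hG, hqG⟩ := hq
  have hadjp : p ≠ Fin.last n → adjG P p (Fin.last n) :=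
    fun h => ⟨h, F, hF.1, hpF, hF.2.1⟩
  have hadjq : q ≠ Fin.last n → adjG P q (Fin.last n) :=
    fun h => ⟨h, G, hG.1, hqG, hG.2.1⟩
  by_cases hp' : p = Fin.last n
  · exact ⟨hpq, G, hG.1, hp' ▸ hG.2.1, hqG⟩
  · by_cases hq' : q = Fin.last n
    · exact ⟨hpq, F, hF.1, hpF, hq' ▸ hF.2.1⟩
    · have hplt : p < Fin.last n := lt_of_le_of_ne (Fin.le_last p) hp'
      have hqlt : q < Fin.last n := lt_of_le_of_ne (Fin.le_last q) hq'
      exact hpeo p q (Fin.last n) hplt hqlt hpq (hadjp hp') (hadjq hq')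

/-- let `P` be a finite chordal polynomial set (in `n+1` variables,
with greatest variable `x_n = Fin.last n`) whose natural variable ordering is a
perfect elimination ordering and with `P^(n) ≠ ∅`.  If `T` is nonconstant with
leading variable `x_n` and `supp T ⊆ supp (P^(n))`, and `R` is a finite polynomial
set with `supp R ⊆ supp (P^(n)) \ {x_n}`, then for
`P̃ = (P \ P^(n)) ∪ {T} ∪ R` we have `G(P̃) ⊆ G(P)`; moreover if
`supp T = supp (P^(n))` then `G(P̃) = G(P)`. -/
theorem statement1 {K : Type*} [Field K] {n : ℕ}
    (P : Set (MvPolynomial (Fin (n + 1)) K)) (hfin : P.Finite) (hpeo : isPEO P)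
    (hne : (levelSet P (Fin.last n)).Nonempty)
    (T : MvPolynomial (Fin (n + 1)) K) (hT : hasLv T (Fin.last n))
    (hTsupp : psupp T ⊆ ssupp (levelSet P (Fin.last n)))
    (R : Set (MvPolynomial (Fin (n + 1)) K)) (hRfin : R.Finite)
    (hRsupp : ssupp R ⊆ ssupp (levelSet P (Fin.last n)) \ {Fin.last n}) :
    subG ((P \ levelSet P (Fin.last n)) ∪ {T} ∪ R) P ∧
    (psupp T = ssupp (levelSet P (Fin.last n)) →
      ∀ p q, adjG ((P \ levelSet P (Fin.last n)) ∪ {T} ∪ R) p q ↔ adjG P p q) := by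
  have sub : subG ((P \ levelSet P (Fin.last n)) ∪ {T} ∪ R) P := by
    rintro p q ⟨hpq, F, hF, hpF, hqF⟩
    rcases hF with (hF | hF) | hF
    · exact ⟨hpq, F, hF.1, hpF, hqF⟩
    · rcases hF with rfl
      exact clique_lemma P hpeo (hTsupp hpF) (hTsupp hqF) hpq
    · have hsub : psupp F ⊆ ssupp (levelSet P (Fin.last n)) \ {Fin.last n} := by
        intro x hx
        exact hRsupp (Set.mem_biUnion hF hx)
      exact clique_lemma P hpeo (hsub hpF).1 (hsub hqF).1 hpq
  refine ⟨sub, fun hTeq p q => ⟨sub p q, ?_⟩⟩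
  rintro ⟨hpq, F, hF, hpF, hqF⟩
  by_cases hFl : F ∈ levelSet P (Fin.last n)
  · have hsub : psupp F ⊆ psupp T := by
      rw [hTeq]; exact fun x hx => Set.mem_biUnion hFl hx
    exact ⟨hpq, T, Or.inl (Or.inr rfl), hsub hpF, hsub hqF⟩
  · exact ⟨hpq, F, Or.inl (Or.inl ⟨hF, hFl⟩), hpF, hqF⟩
end

section
/- Let P be a finite chordal polynomial set in K[x_1,...,x_n] such that x_1 < ... < x_n is a perfect elimination ordering of G(P). Suppose reduction steps red_n, ..., red_1 are performed successively on P, and that at each level i with red̄_{i+1}(P)^(i) ≠ ∅ the chosen polynomial T_i satisfies supp(T_i) = supp(red̄_{i+1}(P)^(i)). Then G(red̄_1(P)) = G(P). -/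
open MvPolynomial

variable {K : Type*} [Field K] {n : ℕ}

/-- A reduction step at level `i` with chosen polynomial `T` and produced set `R`:
`T` is nonconstant with leading variable `x_i` and `supp T ⊆ supp (P^(i))`, `R` is a
finite set of polynomials with `supp R ⊆ supp (P^(i)) \ {x_i}`, and the result is
`(P \ P^(i)) ∪ {T} ∪ R`. -/
def RedStep (i : Fin n) (T : MvPolynomial (Fin n) K) (R : Set (MvPolynomial (Fin n) K))
    (P P' : Set (MvPolynomial (Fin n) K)) : Prop :=
  hasLv T i ∧ psupp T ⊆ ssupp (levelSet P i) ∧ R.Finite ∧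
    ssupp R ⊆ ssupp (levelSet P i) \ {i} ∧
    P' = (P \ levelSet P i) ∪ {T} ∪ R

/-- A reduction step at level `i` with arbitrary choices (identity if `P^(i) = ∅`). -/
def RedStepAny (i : Fin n) (P P' : Set (MvPolynomial (Fin n) K)) : Prop :=
  (levelSet P i = ∅ ∧ P' = P) ∨ ∃ T R, RedStep i T R P P'

lemma adjG_symm {K : Type*} [Field K] {n : ℕ} {P : Set (MvPolynomial (Fin n) K)}
    {p q : Fin n} (h : adjG P p q) : adjG P q p := by
  obtain ⟨h1, F, hF, hp, hq⟩ := h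
  exact ⟨h1.symm, F, hF, hq, hp⟩

lemma key_step {K : Type*} [Field K] {n : ℕ}
    (P Q Q' : Set (MvPolynomial (Fin n) K)) (i : Fin n)
    (T : MvPolynomial (Fin n) K) (R : Set (MvPolynomial (Fin n) K))
    (hpeo : isPEO P) (hQ : ∀ p q, adjG Q p q ↔ adjG P p q)
    (hred : RedStep i T R Q Q') (hsupp : psupp T = ssupp (levelSet Q i)) :
    ∀ p q, adjG Q' p q ↔ adjG P p q := by
  obtain ⟨hT, hTsub, hRfin, hRsub, hQ'⟩ := hred
  have hadj : ∀ p : Fin n, p ∈ ssupp (levelSet Q i) → p ≤ i ∧ (p ≠ i → adjG Q p i) := by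
    intro p hp
    simp only [ssupp, Set.mem_iUnion] at hp
    obtain ⟨F, ⟨hFQ, hFi, hFle⟩, hpF⟩ := hp
    exact ⟨hFle p hpF, fun hne => ⟨hne, F, hFQ, hpF, hFi⟩⟩
  have below : ∀ p q : Fin n, p ≠ q → p ∈ ssupp (levelSet Q i) →
      q ∈ ssupp (levelSet Q i) → adjG P p q := by
    intro p q hpq hp hq
    obtain ⟨hple, hpadj⟩ := hadj p hp
    obtain ⟨hqle, hqadj⟩ := hadj q hq
    by_cases hpi : p = i
    · subst hpi
      exact adjG_symm ((hQ q p).1 (hqadj (fun h => hpq h.symm)))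
    · by_cases hqi : q = i
      · subst hqi
        exact (hQ p q).1 (hpadj hpi)
      · exact hpeo p q i (lt_of_le_of_ne hple hpi) (lt_of_le_of_ne hqle hqi) hpq
          ((hQ p i).1 (hpadj hpi)) ((hQ q i).1 (hqadj hqi))
  intro p q
  constructor
  · rintro ⟨hpq, F, hF, hpF, hqF⟩
    rw [hQ'] at hF
    rcases hF with ((⟨hFQ, -⟩ | hFT) | hFR)
    · exact (hQ p q).1 ⟨hpq, F, hFQ, hpF, hqF⟩
    · rw [Set.mem_singleton_iff] at hFT
      subst hFT
      rw [hsupp] at hpF hqF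
      exact below p q hpq hpF hqF
    · have hps : psupp F ⊆ ssupp R := by
        intro x hx
        simp only [ssupp, Set.mem_iUnion]
        exact ⟨F, hFR, hx⟩
      exact below p q hpq (hRsub (hps hpF)).1 (hRsub (hps hqF)).1
  · intro h
    obtain ⟨hpq, F, hFQ, hpF, hqF⟩ := (hQ p q).2 h
    by_cases hlev : F ∈ levelSet Q i
    · have hps : psupp F ⊆ psupp T := by
        rw [hsupp]
        intro x hx
        simp only [ssupp, Set.mem_iUnion]
        exact ⟨F, hlev, hx⟩
      refine ⟨hpq, T, ?_, hps hpF, hps hqF⟩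
      rw [hQ']
      exact Or.inl (Or.inr rfl)
    · refine ⟨hpq, F, ?_, hpF, hqF⟩
      rw [hQ']
      exact Or.inl (Or.inl ⟨hFQ, hlev⟩)

/-- let `P` be a finite chordal polynomial set whose natural variable
ordering is a perfect elimination ordering, and perform reduction steps
`red_n, ..., red_1` successively on `P` (here `S n = P` and `S i = red_{i+1}(S (i+1))`
in the indexing of `Fin n`, so `S 0 = red̄_1(P)`).  If at each level with nonempty
level set the chosen polynomial `T i` satisfies
`supp (T i) = supp (red̄_{i+2}(P)^(i+1))`, then `G(red̄_1(P)) = G(P)`. -/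
theorem statement2 {K : Type*} [Field K] {n : ℕ}
    (P : Set (MvPolynomial (Fin n) K)) (hfin : P.Finite) (hpeo : isPEO P)
    (S : ℕ → Set (MvPolynomial (Fin n) K))
    (T : ℕ → MvPolynomial (Fin n) K) (R : ℕ → Set (MvPolynomial (Fin n) K))
    (hSn : S n = P)
    (hstep : ∀ i (h : i < n),
      (levelSet (S (i + 1)) ⟨i, h⟩ = ∅ ∧ S i = S (i + 1)) ∨
      (RedStep ⟨i, h⟩ (T i) (R i) (S (i + 1)) (S i) ∧
        psupp (T i) = ssupp (levelSet (S (i + 1)) ⟨i, h⟩))) :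
    ∀ p q, adjG (S 0) p q ↔ adjG P p q := by
  have main : ∀ m, m ≤ n → ∀ p q, adjG (S (n - m)) p q ↔ adjG P p q := by
    intro m
    induction m with
    | zero => intro _ p q; rw [Nat.sub_zero, hSn]
    | succ m ih =>
      intro hm p q
      have hlt : n - (m + 1) < n := by omega
      have hsucc : n - (m + 1) + 1 = n - m := by omega
      have IH := ih (by omega)
      rcases hstep (n - (m + 1)) hlt with ⟨-, heq⟩ | ⟨hred, hsupp⟩
      · rw [heq, hsucc]; exact IH p q
      · rw [hsucc] at hred hsupp
        exact key_step P (S (n - m)) (S (n - (m+1))) _ _ _ hpeo IH hred hsupp p q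
  have := main n le_rfl
  simpa using this
end

section
/- Let P be a finite chordal polynomial set in K[x_1,...,x_n] such that x_1 < ... < x_n is a perfect elimination ordering of G(P), and let red̄_i(P) for i = n, ..., 1 be obtained from P by any sequence of reduction steps. Then for each i = n, ..., 1 and any two distinct variables x_p and x_q, if there exists an index k such that x_p, x_q ∈ supp(red̄_i(P)^(k)), then {x_p, x_q} is an edge of G(P). -/
open MvPolynomial

variable {K : Type*} [Field K] {n : ℕ}

lemma mem_ssupp_iff {K : Type*} [Field K] {n : ℕ} {Q : Set (MvPolynomial (Fin n) K)}
    {p : Fin n} : p ∈ ssupp Q ↔ ∃ F ∈ Q, p ∈ psupp F := by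
  simp [ssupp]

lemma mem_ssupp_level {K : Type*} [Field K] {n : ℕ} {Q : Set (MvPolynomial (Fin n) K)}
    {k p : Fin n} : p ∈ ssupp (levelSet Q k) ↔ ∃ F ∈ Q, hasLv F k ∧ p ∈ psupp F := by
  simp [ssupp, levelSet, and_assoc]

lemma hasLv_unique {K : Type*} [Field K] {n : ℕ} {F : MvPolynomial (Fin n) K}
    {k k' : Fin n} (h : hasLv F k) (h' : hasLv F k') : k = k' :=
  le_antisymm (h'.2 k h.1) (h.2 k' h'.1)

lemma combine {K : Type*} [Field K] {n : ℕ} {P : Set (MvPolynomial (Fin n) K)}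
    (hpeo : isPEO P) {p q k : Fin n} (hpq : p ≠ q) (hpk : p ≤ k) (hqk : q ≤ k)
    (h1 : p = k ∨ adjG P p k) (h2 : q = k ∨ adjG P q k) : adjG P p q := by
  rcases h1 with rfl | h1
  · rcases h2 with rfl | h2
    · exact absurd rfl hpq
    · exact adjG_symm h2
  · rcases h2 with rfl | h2
    · exact h1
    · exact hpeo p q k (lt_of_le_of_ne hpk h1.1) (lt_of_le_of_ne hqk h2.1) hpq h1 h2

lemma claimA {K : Type*} [Field K] {n : ℕ} {ι : Fin n} {T : MvPolynomial (Fin n) K}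
    {R Q P' : Set (MvPolynomial (Fin n) K)} (hred : RedStep ι T R Q P')
    {F : MvPolynomial (Fin n) K} (hF : F ∈ P') {k p : Fin n}
    (hlv : hasLv F k) (hp : p ∈ psupp F) :
    ∃ m, p ∈ ssupp (levelSet Q m) ∧ k ∈ ssupp (levelSet Q m) := by
  obtain ⟨hT, hTs, -, hRs, rfl⟩ := hred
  rcases hF with (hF | hF) | hF
  · exact ⟨k, mem_ssupp_level.2 ⟨F, hF.1, hlv, hp⟩,
      mem_ssupp_level.2 ⟨F, hF.1, hlv, hlv.1⟩⟩
  · rcases hF with rfl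
    obtain rfl : k = ι := hasLv_unique hlv hT
    exact ⟨k, hTs hp, hTs hlv.1⟩
  · exact ⟨ι, (hRs (mem_ssupp_iff.2 ⟨F, hF, hp⟩)).1,
      (hRs (mem_ssupp_iff.2 ⟨F, hF, hlv.1⟩)).1⟩

/-- let `P` be a finite chordal polynomial set whose natural variable
ordering is a perfect elimination ordering, and let the sets `S i` (`i = n, ..., 0`,
with `S n = P` and `S i = red_{i+1}(S (i+1))`) be obtained from `P` by any sequence
of reduction steps.  Then for each `i ≤ n` and any two distinct variables
`x_p, x_q` lying in `supp ((S i)^(k))` for some `k`, `{x_p, x_q}` is an edge of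
`G(P)`. -/
theorem statement3 {K : Type*} [Field K] {n : ℕ}
    (P : Set (MvPolynomial (Fin n) K)) (hfin : P.Finite) (hpeo : isPEO P)
    (S : ℕ → Set (MvPolynomial (Fin n) K)) (hSn : S n = P)
    (hstep : ∀ i (h : i < n), RedStepAny ⟨i, h⟩ (S (i + 1)) (S i)) :
    ∀ i ≤ n, ∀ k p q : Fin n, p ≠ q →
      p ∈ ssupp (levelSet (S i) k) → q ∈ ssupp (levelSet (S i) k) →
      adjG P p q := by
  have main : ∀ j i, n = i + j → ∀ k p q : Fin n, p ≠ q →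
      p ∈ ssupp (levelSet (S i) k) → q ∈ ssupp (levelSet (S i) k) →
      adjG P p q := by
    intro j
    induction j with
    | zero =>
      intro i hi k p q hpq hp hq
      obtain rfl : i = n := by omega
      rw [hSn] at hp hq
      obtain ⟨F, hF, hlvF, hpF⟩ := mem_ssupp_level.1 hp
      obtain ⟨G, hG, hlvG, hqG⟩ := mem_ssupp_level.1 hq
      refine combine hpeo hpq (hlvF.2 p hpF) (hlvG.2 q hqG) ?_ ?_
      · rcases eq_or_ne p k with h | h
        · exact Or.inl h
        · exact Or.inr ⟨h, F, hF, hpF, hlvF.1⟩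
      · rcases eq_or_ne q k with h | h
        · exact Or.inl h
        · exact Or.inr ⟨h, G, hG, hqG, hlvG.1⟩
    | succ j ih =>
      intro i hi k p q hpq hp hq
      have hlt : i < n := by omega
      have IH := ih (i + 1) (by omega)
      rcases hstep i hlt with ⟨-, hid⟩ | ⟨T, R, hred⟩
      · rw [hid] at hp hq; exact IH k p q hpq hp hq
      · obtain ⟨F, hF, hlvF, hpF⟩ := mem_ssupp_level.1 hp
        obtain ⟨G, hG, hlvG, hqG⟩ := mem_ssupp_level.1 hq
        have hF' : F ∈ S i := hF
        have hG' : G ∈ S i := hG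
        obtain ⟨m₁, hpm, hkm₁⟩ := claimA hred hF' hlvF hpF
        obtain ⟨m₂, hqm, hkm₂⟩ := claimA hred hG' hlvG hqG
        refine combine hpeo hpq (hlvF.2 p hpF) (hlvG.2 q hqG) ?_ ?_
        · rcases eq_or_ne p k with h | h
          · exact Or.inl h
          · exact Or.inr (IH m₁ p k h hpm hkm₁)
        · rcases eq_or_ne q k with h | h
          · exact Or.inl h
          · exact Or.inr (IH m₂ q k h hqm hkm₂)
  intro i hi
  exact main (n - i) i (by omega)
end

section
/- Let P be a finite chordal polynomial set in K[x_1,...,x_n] such that x_1 < ... < x_n is a perfect elimination ordering of G(P), and let red̄_i(P) for i = n, ..., 1 be obtained from P by any sequence of reduction steps. Then G(red̄_i(P)) ⊆ G(P) for each i = n, ..., 1. -/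
open MvPolynomial

variable {K : Type*} [Field K] {n : ℕ}

lemma step_preserve {K : Type*} [Field K] {n : ℕ} {P Q Q' : Set (MvPolynomial (Fin n) K)}
    {i : Fin n} (hpeo : isPEO P) (hQ : subG Q P) (h : RedStepAny i Q Q') : subG Q' P := by
  rcases h with ⟨_, rfl⟩ | ⟨T, R, hT, hTs, _, hRs, rfl⟩
  · exact hQ
  · have hsupp : ∀ p, p ∈ ssupp (levelSet Q i) → p ≠ i → adjG P p i ∧ p < i := by
      intro p hp hne
      obtain ⟨F, hF, hpF⟩ : ∃ F ∈ levelSet Q i, p ∈ psupp F := by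
        simpa [ssupp] using hp
      obtain ⟨hFQ, hiF, hle⟩ := hF
      exact ⟨hQ _ _ ⟨hne, F, hFQ, hpF, hiF⟩, lt_of_le_of_ne (hle p hpF) hne⟩
    have key : ∀ p q, p ∈ ssupp (levelSet Q i) → q ∈ ssupp (levelSet Q i) → p ≠ q →
        adjG P p q := by
      intro p q hp hq hpq
      by_cases hpi : p = i
      · subst hpi
        exact adjG_symm (hsupp q hq (Ne.symm hpq)).1
      · by_cases hqi : q = i
        · subst hqi; exact (hsupp p hp hpi).1
        · obtain ⟨hap, hlp⟩ := hsupp p hp hpi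
          obtain ⟨haq, hlq⟩ := hsupp q hq hqi
          exact hpeo p q i hlp hlq hpq hap haq
    rintro p q ⟨hne, F, hF, hp, hq⟩
    rcases hF with (⟨hFQ, _⟩ | hFT) | hFR
    · exact hQ _ _ ⟨hne, F, hFQ, hp, hq⟩
    · simp only [Set.mem_singleton_iff] at hFT
      subst hFT
      exact key p q (hTs hp) (hTs hq) hne
    · have hmem : ∀ r, r ∈ psupp F → r ∈ ssupp R := fun r hr =>
        Set.mem_iUnion₂.mpr ⟨F, hFR, hr⟩
      exact key p q (hRs (hmem p hp)).1 (hRs (hmem q hq)).1 hne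

/-- let `P` be a finite chordal polynomial set whose natural variable
ordering is a perfect elimination ordering, and let the sets `S i` (`i = n, ..., 0`,
with `S n = P` and `S i = red_{i+1}(S (i+1))`) be obtained from `P` by any sequence
of reduction steps.  Then `G(S i) ⊆ G(P)` for each `i ≤ n`. -/
theorem statement4 {K : Type*} [Field K] {n : ℕ}
    (P : Set (MvPolynomial (Fin n) K)) (hfin : P.Finite) (hpeo : isPEO P)
    (S : ℕ → Set (MvPolynomial (Fin n) K)) (hSn : S n = P)
    (hstep : ∀ i (h : i < n), RedStepAny ⟨i, h⟩ (S (i + 1)) (S i)) :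
    ∀ i ≤ n, subG (S i) P := by
  have aux : ∀ j, subG (S (n - j)) P := by
    intro j
    induction j with
    | zero =>
      simp only [Nat.sub_zero, hSn]
      exact fun p q h => h
    | succ j ih =>
      by_cases hj : j < n
      · have h1 : n - (j + 1) < n := by omega
        have hs := hstep (n - (j + 1)) h1
        have heq : n - (j + 1) + 1 = n - j := by omega
        rw [heq] at hs
        exact step_preserve hpeo ih hs
      · have heq : n - (j + 1) = n - j := by omega
        rw [heq]; exact ih
  intro i hi
  have h := aux (n - i)
  rwa [Nat.sub_sub_self hi] at h
end

section
/- Let P be a finite chordal polynomial set in K[x_1,...,x_n] such that x_1 < ... < x_n is a perfect elimination ordering of G(P), and let red̄_1(P) be obtained from P by any sequence of reduction steps red_n, ..., red_1. If red̄_1(P) contains no nonzero constant polynomial, then the nonzero elements of red̄_1(P), ordered by their leading variables, form a triangular set T such that G(T) ⊆ G(P). -/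
open MvPolynomial

variable {K : Type*} [Field K] {n : ℕ}

lemma aux_hasLv_antisymm {F : MvPolynomial (Fin n) K} {a b : Fin n}
    (ha : hasLv F a) (hb : hasLv F b) : a = b :=
  le_antisymm (hb.2 a ha.1) (ha.2 b hb.1)

lemma aux_mem_ssupp {R : Set (MvPolynomial (Fin n) K)} {F : MvPolynomial (Fin n) K}
    (hF : F ∈ R) : psupp F ⊆ ssupp R := fun _ hk => Set.mem_biUnion hF hk

lemma aux_ssupp_level {P : Set (MvPolynomial (Fin n) K)} {i k : Fin n}
    (h : k ∈ ssupp (levelSet P i)) : ∃ G, G ∈ levelSet P i ∧ k ∈ psupp G := by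
  simpa [ssupp, Set.mem_iUnion] using h

lemma aux_ssupp_level_le {P : Set (MvPolynomial (Fin n) K)} {i k : Fin n}
    (h : k ∈ ssupp (levelSet P i)) : k ≤ i := by
  obtain ⟨G, hG, hk⟩ := aux_ssupp_level h
  exact hG.2.2 k hk

lemma aux_levelA {i : Fin n} {P P' : Set (MvPolynomial (Fin n) K)}
    (h : RedStepAny i P P') : (levelSet P' i).Subsingleton := by
  rcases h with ⟨he, rfl⟩ | ⟨T, R, hT, hTs, hRf, hRs, rfl⟩
  · rw [he]; exact Set.subsingleton_empty
  · have key : ∀ F, F ∈ levelSet ((P \ levelSet P i) ∪ {T} ∪ R) i → F = T := by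
      rintro F ⟨hF, hlv⟩
      rcases hF with (hF | hF) | hF
      · exact absurd ⟨hF.1, hlv⟩ hF.2
      · exact hF
      · exact absurd rfl (hRs (aux_mem_ssupp hF hlv.1)).2
    intro F hF G hG
    rw [key F hF, key G hG]

lemma aux_levelB {i k : Fin n} {P P' : Set (MvPolynomial (Fin n) K)}
    (h : RedStepAny i P P') (hik : i < k) : levelSet P' k ⊆ levelSet P k := by
  rcases h with ⟨he, rfl⟩ | ⟨T, R, hT, hTs, hRf, hRs, rfl⟩
  · exact subset_rfl
  · rintro F ⟨hF, hlv⟩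
    rcases hF with (hF | hF) | hF
    · exact ⟨hF.1, hlv⟩
    · exfalso
      have hFT : F = T := hF
      subst hFT
      exact absurd (aux_hasLv_antisymm hT hlv) (ne_of_lt hik)
    · exfalso
      have h1 := hRs (aux_mem_ssupp hF hlv.1)
      exact absurd (aux_ssupp_level_le h1.1) (not_le.mpr hik)

lemma aux_subG_step {i : Fin n} {P Q Q' : Set (MvPolynomial (Fin n) K)}
    (hpeo : isPEO P) (hsub : subG Q P) (h : RedStepAny i Q Q') : subG Q' P := by
  rcases h with ⟨he, rfl⟩ | ⟨T, R, hT, hTs, hRf, hRs, rfl⟩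
  · exact hsub
  · rintro p q ⟨hne, F, hF, hp, hq⟩
    have main : p ∈ ssupp (levelSet Q i) → q ∈ ssupp (levelSet Q i) → adjG P p q := by
      intro hp' hq'
      obtain ⟨Fp, hFp, hpFp⟩ := aux_ssupp_level hp'
      obtain ⟨Fq, hFq, hqFq⟩ := aux_ssupp_level hq'
      by_cases hpi : p = i
      · subst hpi
        exact hsub p q ⟨hne, Fq, hFq.1, hFq.2.1, hqFq⟩
      · by_cases hqi : q = i
        · subst hqi
          exact hsub p q ⟨hne, Fp, hFp.1, hpFp, hFp.2.1⟩
        · have hpi' : p < i := lt_of_le_of_ne (hFp.2.2 p hpFp) hpi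
          have hqi' : q < i := lt_of_le_of_ne (hFq.2.2 q hqFq) hqi
          exact hpeo p q i hpi' hqi' hne
            (hsub p i ⟨hpi, Fp, hFp.1, hpFp, hFp.2.1⟩)
            (hsub q i ⟨hqi, Fq, hFq.1, hqFq, hFq.2.1⟩)
    rcases hF with (hF | hF) | hF
    · exact hsub p q ⟨hne, F, hF.1, hp, hq⟩
    · have hFT : F = T := hF
      subst hFT
      exact main (hTs hp) (hTs hq)
    · exact main (hRs (aux_mem_ssupp hF hp)).1 (hRs (aux_mem_ssupp hF hq)).1

lemma aux_hasLv_max {F : MvPolynomial (Fin n) K} (h : F.vars.Nonempty) :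
    hasLv F (F.vars.max' h) :=
  ⟨F.vars.max'_mem h, fun j hj => F.vars.le_max' j hj⟩

/-- let `P` be a finite chordal polynomial set whose natural variable
ordering is a perfect elimination ordering, and let `red̄_1(P) = S 0` be obtained
from `P` by any sequence of reduction steps (`S n = P`, `S i = red_{i+1}(S (i+1))`).
If `S 0` contains no nonzero constant polynomial, then its nonzero elements, ordered
by their leading variables, form a triangular set `L` with `G(L) ⊆ G(P)`. -/
theorem statement5 {K : Type*} [Field K] {n : ℕ}
    (P : Set (MvPolynomial (Fin n) K)) (hfin : P.Finite) (hpeo : isPEO P)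
    (S : ℕ → Set (MvPolynomial (Fin n) K)) (hSn : S n = P)
    (hstep : ∀ i (h : i < n), RedStepAny ⟨i, h⟩ (S (i + 1)) (S i))
    (hnc : ∀ F ∈ S 0, psupp F = ∅ → F = 0) :
    ∃ L : List (MvPolynomial (Fin n) K),
      (∀ F, F ∈ L ↔ F ∈ S 0 ∧ F ≠ 0) ∧ IsTriangularSet L ∧
      subG {F | F ∈ L} P := by
  classical
  -- G(S j) ⊆ G(P) by downward induction
  have hsubG : ∀ m, m ≤ n → subG (S (n - m)) P := by
    intro m
    induction m with
    | zero => intro _; rw [Nat.sub_zero, hSn]; exact fun p q h => h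
    | succ m ih =>
      intro hm
      have hm' : m ≤ n := Nat.le_of_succ_le hm
      have hi : n - (m + 1) < n := by omega
      have hst := hstep (n - (m + 1)) hi
      have heq : n - (m + 1) + 1 = n - m := by omega
      rw [heq] at hst
      exact aux_subG_step hpeo (ih hm') hst
  have hsub0 : subG (S 0) P := by
    have := hsubG n le_rfl
    rwa [Nat.sub_self] at this
  -- each level of S 0 has at most one element
  have hss : ∀ k : Fin n, (levelSet (S 0) k).Subsingleton := by
    intro k
    have hA : ∀ d, (levelSet (S (k.val - d)) k).Subsingleton := by
      intro d
      induction d with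
      | zero =>
        have hst := hstep k.val k.isLt
        have hkk : (⟨k.val, k.isLt⟩ : Fin n) = k := rfl
        rw [hkk] at hst
        simpa using aux_levelA hst
      | succ d ih =>
        by_cases hd : k.val ≤ d
        · have heq : k.val - (d + 1) = k.val - d := by omega
          rw [heq]; exact ih
        · have hlt : k.val - (d + 1) < n := by omega
          have hst := hstep (k.val - (d + 1)) hlt
          have heq : k.val - (d + 1) + 1 = k.val - d := by omega
          rw [heq] at hst
          have hik : (⟨k.val - (d + 1), hlt⟩ : Fin n) < k := by
            rw [Fin.lt_def]; simp; omega
          exact ih.anti (aux_levelB hst hik)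
    have := hA k.val
    rwa [Nat.sub_self] at this
  set Z : Set (MvPolynomial (Fin n) K) := {F | F ∈ S 0 ∧ F ≠ 0} with hZ
  have hvars : ∀ F ∈ Z, F.vars.Nonempty := by
    intro F hF
    rcases Finset.eq_empty_or_nonempty F.vars with he | h
    · exact absurd (hnc F hF.1 (by simp [psupp, he])) hF.2
    · exact h
  let lvk : MvPolynomial (Fin n) K → ℕ :=
    fun F => if h : F.vars.Nonempty then (F.vars.max' h).val + 1 else 0
  have hlvk : ∀ F (h : F.vars.Nonempty), lvk F = (F.vars.max' h).val + 1 := by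
    intro F h
    simp only [lvk, dif_pos h]
  have hinj : Set.InjOn lvk Z := by
    intro F hF G hG hfg
    have hFn := hvars F hF
    have hGn := hvars G hG
    rw [hlvk F hFn, hlvk G hGn] at hfg
    have h1 : hasLv F (F.vars.max' hFn) := aux_hasLv_max hFn
    have h2 : hasLv G (G.vars.max' hGn) := aux_hasLv_max hGn
    have hmm : F.vars.max' hFn = G.vars.max' hGn := Fin.ext (by omega)
    rw [hmm] at h1
    exact hss _ ⟨hF.1, h1⟩ ⟨hG.1, h2⟩
  have hZfin : Z.Finite := by
    refine Set.Finite.of_finite_image ?_ hinj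
    refine Set.Finite.subset (Set.finite_Iic n) ?_
    rintro y ⟨F, hF, rfl⟩
    have hFn := hvars F hF
    rw [hlvk F hFn]
    exact (F.vars.max' hFn).isLt
  let l0 := hZfin.toFinset.toList
  let le : MvPolynomial (Fin n) K → MvPolynomial (Fin n) K → Bool :=
    fun F G => decide (lvk F ≤ lvk G)
  let L := l0.mergeSort le
  have hperm : L.Perm l0 := List.mergeSort_perm l0 le
  have hmemL : ∀ F, F ∈ L ↔ F ∈ Z := by
    intro F
    rw [hperm.mem_iff]
    simp [l0, Set.Finite.mem_toFinset]
  have hnodup : L.Nodup := hperm.nodup_iff.mpr (Finset.nodup_toList _)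
  have hsorted : L.Pairwise fun F G => le F G = true :=
    List.pairwise_mergeSort
      (by intro a b c h1 h2
          simp only [le, decide_eq_true_eq] at *
          exact le_trans h1 h2)
      (by intro a b
          simp only [le, Bool.or_eq_true, decide_eq_true_eq]
          exact le_total _ _) l0
  have hpw : L.Pairwise fun F G => ∃ a b, hasLv F a ∧ hasLv G b ∧ a < b := by
    refine List.Pairwise.imp_of_mem ?_ (hsorted.and hnodup)
    rintro F G hFL hGL ⟨hle, hneq⟩
    have hFZ : F ∈ Z := (hmemL F).mp hFL
    have hGZ : G ∈ Z := (hmemL G).mp hGL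
    have hFn := hvars F hFZ
    have hGn := hvars G hGZ
    refine ⟨F.vars.max' hFn, G.vars.max' hGn, aux_hasLv_max hFn, aux_hasLv_max hGn, ?_⟩
    have hle' : lvk F ≤ lvk G := by
      simpa only [le, decide_eq_true_eq] using hle
    have hne' : lvk F ≠ lvk G := fun h => hneq (hinj hFZ hGZ h)
    rw [hlvk F hFn, hlvk G hGn] at hle' hne'
    rw [Fin.lt_def]
    omega
  refine ⟨L, fun F => (hmemL F), ⟨?_, hpw.isChain⟩, ?_⟩
  · intro F hF
    obtain ⟨x, hx⟩ := hvars F ((hmemL F).mp hF)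
    exact ⟨x, hx⟩
  · rintro p q ⟨hne, F, hF, hp, hq⟩
    exact hsub0 p q ⟨hne, F, ((hmemL F).mp hF).1, hp, hq⟩
end

section
/- Let F be a finite chordal polynomial set in K[x_1,...,x_n] such that x_1 < ... < x_n is a perfect elimination ordering of G(F). Let P be a finite polynomial set with G(P) ⊆ G(F), let k be an index with P^(k) ≠ ∅, let T ∈ P^(k), and let R be a finite polynomial set with supp(R) ⊆ supp(P^(k)). Define P' = (P \ P^(k)) ∪ {T} ∪ R. Then G(P') ⊆ G(F). -/
open MvPolynomial

variable {K : Type*} [Field K] {n : ℕ}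

/-- let `Fs` be a finite chordal polynomial set whose natural variable
ordering is a perfect elimination ordering, `P` a finite polynomial set with
`G(P) ⊆ G(Fs)`, `k` an index with `P^(k) ≠ ∅`, `T ∈ P^(k)`, and `R` a finite
polynomial set with `supp R ⊆ supp (P^(k))`.  Then for
`P' = (P \ P^(k)) ∪ {T} ∪ R` we have `G(P') ⊆ G(Fs)`. -/
theorem statement6 {K : Type*} [Field K] {n : ℕ}
    (Fs : Set (MvPolynomial (Fin n) K)) (hFfin : Fs.Finite) (hpeo : isPEO Fs)
    (P : Set (MvPolynomial (Fin n) K)) (hPfin : P.Finite) (hPF : subG P Fs)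
    (k : Fin n) (T : MvPolynomial (Fin n) K) (hT : T ∈ levelSet P k)
    (R : Set (MvPolynomial (Fin n) K)) (hRfin : R.Finite)
    (hRsupp : ssupp R ⊆ ssupp (levelSet P k)) :
    subG ((P \ levelSet P k) ∪ {T} ∪ R) Fs := by
  intro p q hpq
  obtain ⟨hne, F, hF, hpF, hqF⟩ := hpq
  rcases hF with (hF | hF)
  · -- F ∈ P, directly
    have hFP : F ∈ P := by
      rcases hF with (hF | hF)
      · exact hF.1
      · simp only [Set.mem_singleton_iff] at hF; subst hF; exact hT.1
    exact hPF p q ⟨hne, F, hFP, hpF, hqF⟩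
  · -- F ∈ R
    have hp : p ∈ ssupp (levelSet P k) := hRsupp (Set.mem_biUnion hF hpF)
    have hq : q ∈ ssupp (levelSet P k) := hRsupp (Set.mem_biUnion hF hqF)
    obtain ⟨F₁, hF₁, hpF₁⟩ := Set.mem_iUnion₂.mp hp
    obtain ⟨F₂, hF₂, hqF₂⟩ := Set.mem_iUnion₂.mp hq
    have hpk : p ≤ k := hF₁.2.2 p hpF₁
    have hqk : q ≤ k := hF₂.2.2 q hqF₂
    rcases eq_or_lt_of_le hpk with hpk' | hpk'
    · subst hpk'
      exact hPF p q ⟨hne, F₂, hF₂.1, hF₂.2.1, hqF₂⟩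
    rcases eq_or_lt_of_le hqk with hqk' | hqk'
    · subst hqk'
      exact hPF p q ⟨hne, F₁, hF₁.1, hpF₁, hF₁.2.1⟩
    have h1 : adjG Fs p k := hPF p k ⟨hpk'.ne, F₁, hF₁.1, hpF₁, hF₁.2.1⟩
    have h2 : adjG Fs q k := hPF q k ⟨hqk'.ne, F₂, hF₂.1, hqF₂, hF₂.2.1⟩
    exact hpeo p q k hpk' hqk' hne h1 h2
end

section
/- Let F be a finite chordal polynomial set in K[x_1,...,x_n] such that x_1 < ... < x_n is a perfect elimination ordering of G(F). Then every pair (P, Q) of finite polynomial sets obtained from the pair (F, ∅) by finitely many Wang steps satisfies G(P) ⊆ G(F) and G(Q) ⊆ G(F). -/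
open MvPolynomial

variable {K : Type*} [Field K] {n : ℕ}

/-- A Wang step: transform a pair `(P, Q)` of polynomial sets by choosing `k` with
`P^(k) ≠ ∅` and `T ∈ P^(k)`, and either (left branch) passing to
`((P \ P^(k)) ∪ {T} ∪ R, Q ∪ {I})` for a finite set `R` with
`supp R ⊆ supp (P^(k))` and a polynomial `I` with `supp I ⊆ supp T`, or
(right branch) passing to `((P \ {T}) ∪ {I, R'}, Q)` for polynomials `I, R'` with
`supp I ⊆ supp T` and `supp R' ⊆ supp T`. -/
def WangStep (PQ PQ' :
    Set (MvPolynomial (Fin n) K) × Set (MvPolynomial (Fin n) K)) : Prop :=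
  ∃ (k : Fin n) (T : MvPolynomial (Fin n) K), T ∈ levelSet PQ.1 k ∧
    ((∃ (R : Set (MvPolynomial (Fin n) K)) (I : MvPolynomial (Fin n) K),
        R.Finite ∧ ssupp R ⊆ ssupp (levelSet PQ.1 k) ∧ psupp I ⊆ psupp T ∧
        PQ'.1 = (PQ.1 \ levelSet PQ.1 k) ∪ {T} ∪ R ∧ PQ'.2 = PQ.2 ∪ {I}) ∨
      (∃ I R' : MvPolynomial (Fin n) K, psupp I ⊆ psupp T ∧ psupp R' ⊆ psupp T ∧
        PQ'.1 = (PQ.1 \ {T}) ∪ {I, R'} ∧ PQ'.2 = PQ.2))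

lemma key_level {K : Type*} [Field K] {n : ℕ}
    {Fs P : Set (MvPolynomial (Fin n) K)} (hpeo : isPEO Fs) (h1 : subG P Fs)
    {k p q : Fin n} (hpq : p ≠ q)
    (hp : p ∈ ssupp (levelSet P k)) (hq : q ∈ ssupp (levelSet P k)) :
    adjG Fs p q := by
  simp only [ssupp, Set.mem_iUnion, exists_prop] at hp hq
  obtain ⟨F1, ⟨hF1P, hk1, hle1⟩, hpF1⟩ := hp
  obtain ⟨F2, ⟨hF2P, hk2, hle2⟩, hqF2⟩ := hq
  by_cases hpk : p = k
  · subst hpk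
    exact h1 p q ⟨hpq, F2, hF2P, hk2, hqF2⟩
  · by_cases hqk : q = k
    · subst hqk
      exact h1 p q ⟨hpq, F1, hF1P, hpF1, hk1⟩
    · have hplt : p < k := lt_of_le_of_ne (hle1 p hpF1) hpk
      have hqlt : q < k := lt_of_le_of_ne (hle2 q hqF2) hqk
      exact hpeo p q k hplt hqlt hpq
        (h1 p k ⟨hpk, F1, hF1P, hpF1, hk1⟩)
        (h1 q k ⟨hqk, F2, hF2P, hqF2, hk2⟩)

lemma step_preserves {K : Type*} [Field K] {n : ℕ}
    {Fs : Set (MvPolynomial (Fin n) K)} (hpeo : isPEO Fs)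
    {PQ PQ' : Set (MvPolynomial (Fin n) K) × Set (MvPolynomial (Fin n) K)}
    (h1 : subG PQ.1 Fs) (h2 : subG PQ.2 Fs) (hs : WangStep PQ PQ') :
    subG PQ'.1 Fs ∧ subG PQ'.2 Fs := by
  obtain ⟨k, T, hT, hbr⟩ := hs
  have hTsupp : ∀ p q : Fin n, p ≠ q → p ∈ psupp T → q ∈ psupp T → adjG Fs p q := by
    intro p q hpq hp hq
    exact h1 p q ⟨hpq, T, hT.1, hp, hq⟩
  rcases hbr with ⟨R, I, -, hR, hI, hP', hQ'⟩ | ⟨I, R', hI, hR', hP', hQ'⟩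
  · constructor
    · intro p q ⟨hpq, F, hF, hpF, hqF⟩
      rw [hP'] at hF
      rcases hF with (hF | hF) | hF
      · exact h1 p q ⟨hpq, F, hF.1, hpF, hqF⟩
      · rcases hF with rfl
        exact hTsupp p q hpq hpF hqF
      · exact key_level (k := k) hpeo h1 hpq (hR (Set.mem_biUnion hF hpF))
          (hR (Set.mem_biUnion hF hqF))
    · intro p q ⟨hpq, F, hF, hpF, hqF⟩
      rw [hQ'] at hF
      rcases hF with hF | hF
      · exact h2 p q ⟨hpq, F, hF, hpF, hqF⟩
      · rcases hF with rfl
        exact hTsupp p q hpq (hI hpF) (hI hqF)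
  · constructor
    · intro p q ⟨hpq, F, hF, hpF, hqF⟩
      rw [hP'] at hF
      rcases hF with hF | hF | hF
      · exact h1 p q ⟨hpq, F, hF.1, hpF, hqF⟩
      · rcases hF with rfl
        exact hTsupp p q hpq (hI hpF) (hI hqF)
      · rcases hF with rfl
        exact hTsupp p q hpq (hR' hpF) (hR' hqF)
    · rw [hQ']; exact h2

/-- let `Fs` be a finite chordal polynomial set whose natural variable
ordering is a perfect elimination ordering.  Then every pair `(P, Q)` obtained from
`(Fs, ∅)` by finitely many Wang steps satisfies `G(P) ⊆ G(Fs)` and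
`G(Q) ⊆ G(Fs)`. -/
theorem statement8 {K : Type*} [Field K] {n : ℕ}
    (Fs : Set (MvPolynomial (Fin n) K)) (hFfin : Fs.Finite) (hpeo : isPEO Fs)
    (P Q : Set (MvPolynomial (Fin n) K))
    (h : Relation.ReflTransGen WangStep (Fs, ∅) (P, Q)) :
    subG P Fs ∧ subG Q Fs := by
  have : ∀ PQ : Set (MvPolynomial (Fin n) K) × Set (MvPolynomial (Fin n) K),
      Relation.ReflTransGen WangStep (Fs, ∅) PQ → subG PQ.1 Fs ∧ subG PQ.2 Fs := by
    intro PQ h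
    induction h with
    | refl =>
      exact ⟨fun p q h => h, fun p q ⟨_, F, hF, _⟩ => absurd hF (Set.notMem_empty F)⟩
    | tail _ hs ih => exact step_preserves hpeo ih.1 ih.2 hs
  exact this (P, Q) h
end

section
/- Let F be a finite chordal polynomial set in K[x_1,...,x_n] such that x_1 < ... < x_n is a perfect elimination ordering of G(F). Let P be a finite polynomial set with G(P) ⊆ G(F), let k be an index, and let T_1 and T_2 be two distinct polynomials in P^(k). Let H_2, ..., H_r be polynomials with supp(H_i) ⊆ supp(T_1) ∪ supp(T_2) for each i, and let I_2, ..., I_r be polynomials with supp(I_i) ⊆ supp(H_i) for each i. Define P_i = (P \ {T_1, T_2}) ∪ {H_i, I_{i+1}, ..., I_r} for i = 2, ..., r−1 and P_r = (P \ {T_1, T_2}) ∪ {H_r}. Then G(P_i) ⊆ G(F) for every i = 2, ..., r. -/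
open MvPolynomial

variable {K : Type*} [Field K] {n : ℕ}

/-- let `Fs` be a finite chordal polynomial set whose natural variable
ordering is a perfect elimination ordering, `P` a finite polynomial set with
`G(P) ⊆ G(Fs)`, and `T₁ ≠ T₂` two polynomials in `P^(k)`.  Given polynomials
`H_2, ..., H_r` with `supp (H i) ⊆ supp T₁ ∪ supp T₂` and `I_2, ..., I_r` with
`supp (I i) ⊆ supp (H i)`, set `P_i = (P \ {T₁, T₂}) ∪ {H i} ∪ {I_{i+1}, ..., I_r}`
for `2 ≤ i ≤ r` (so `P_r = (P \ {T₁, T₂}) ∪ {H r}`).  Then `G(P_i) ⊆ G(Fs)` for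
every `i = 2, ..., r`. -/
theorem statement10 {K : Type*} [Field K] {n : ℕ}
    (Fs : Set (MvPolynomial (Fin n) K)) (hFfin : Fs.Finite) (hpeo : isPEO Fs)
    (P : Set (MvPolynomial (Fin n) K)) (hPfin : P.Finite) (hPF : subG P Fs)
    (k : Fin n) (T₁ T₂ : MvPolynomial (Fin n) K) (hne : T₁ ≠ T₂)
    (hT₁ : T₁ ∈ levelSet P k) (hT₂ : T₂ ∈ levelSet P k)
    (r : ℕ) (hr : 2 ≤ r) (H I : ℕ → MvPolynomial (Fin n) K)
    (hH : ∀ i, 2 ≤ i → i ≤ r → psupp (H i) ⊆ psupp T₁ ∪ psupp T₂)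
    (hI : ∀ i, 2 ≤ i → i ≤ r → psupp (I i) ⊆ psupp (H i)) :
    ∀ i, 2 ≤ i → i ≤ r →
      subG ((P \ {T₁, T₂}) ∪ {H i} ∪ (I '' {m | i < m ∧ m ≤ r})) Fs := by

  obtain ⟨hT₁P, hkT₁, hlvT₁⟩ := hT₁
  obtain ⟨hT₂P, hkT₂, hlvT₂⟩ := hT₂
  have key : ∀ p q : Fin n, p ≠ q → p ∈ psupp T₁ ∪ psupp T₂ →
      q ∈ psupp T₁ ∪ psupp T₂ → adjG Fs p q := by
    intro p q hpq hp hq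
    have samed : ∀ T ∈ P, p ∈ psupp T → q ∈ psupp T → adjG Fs p q := fun T hT h1 h2 =>
      hPF p q ⟨hpq, T, hT, h1, h2⟩
    have cross : ∀ (A B : MvPolynomial (Fin n) K), A ∈ P → B ∈ P →
        k ∈ psupp A → k ∈ psupp B → (∀ j ∈ psupp A, j ≤ k) → (∀ j ∈ psupp B, j ≤ k) →
        p ∈ psupp A → q ∈ psupp B → adjG Fs p q := by
      intro A B hA hB hkA hkB hlA hlB hpA hqB
      by_cases hpk : p = k
      · exact samed B hB (hpk ▸ hkB) hqB
      by_cases hqk : q = k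
      · exact samed A hA hpA (hqk ▸ hkA)
      exact hpeo p q k (lt_of_le_of_ne (hlA p hpA) hpk) (lt_of_le_of_ne (hlB q hqB) hqk)
        hpq (hPF p k ⟨hpk, A, hA, hpA, hkA⟩) (hPF q k ⟨hqk, B, hB, hqB, hkB⟩)
    rcases hp with hp | hp <;> rcases hq with hq | hq
    · exact samed T₁ hT₁P hp hq
    · exact cross T₁ T₂ hT₁P hT₂P hkT₁ hkT₂ hlvT₁ hlvT₂ hp hq
    · exact cross T₂ T₁ hT₂P hT₁P hkT₂ hkT₁ hlvT₂ hlvT₁ hp hq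
    · exact samed T₂ hT₂P hp hq
  intro i h2 hir p q hadj
  obtain ⟨hpq, F, hF, hpF, hqF⟩ := hadj
  rcases hF with (hF | hF) | hF
  · exact hPF p q ⟨hpq, F, hF.1, hpF, hqF⟩
  · rcases hF with rfl
    exact key p q hpq (hH i h2 hir hpF) (hH i h2 hir hqF)
  · obtain ⟨m, ⟨him, hmr⟩, rfl⟩ := hF
    have h2m : 2 ≤ m := le_trans h2 (le_of_lt him)
    have hsub : psupp (I m) ⊆ psupp T₁ ∪ psupp T₂ :=
      (hI m h2m hmr).trans (hH m h2m hmr)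
    exact key p q hpq (hsub hpF) (hsub hqF)
end

section
/- Let F be a finite chordal polynomial set in K[x_1,...,x_n] such that x_1 < ... < x_n is a perfect elimination ordering of G(F). Then every pair (P, Q) of finite polynomial sets obtained from the pair (F, ∅) by finitely many subresultant-based steps satisfies G(P) ⊆ G(F) and G(Q) ⊆ G(F). -/
open MvPolynomial

variable {K : Type*} [Field K] {n : ℕ}

/-- A subresultant-based step: transform a pair `(P, Q)` of polynomial sets by
choosing `k` with `P^(k) ≠ ∅`, and either (right branch) choosing `T ∈ P^(k)` and
polynomials `I, R'` supported in `supp T` and passing to `((P \ {T}) ∪ {I, R'}, Q)`;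
or (subresultant branch) choosing distinct `T₁, T₂ ∈ P^(k)`, polynomials
`H_2, ..., H_r` with `supp (H m) ⊆ supp T₁ ∪ supp T₂`, polynomials `I_2, ..., I_r`
with `supp (I m) ⊆ supp (H m)`, a polynomial `J` with `supp J ⊆ supp T₂`, and
`2 ≤ i ≤ r`, and passing to
`((P \ {T₁, T₂}) ∪ {H i, I_{i+1}, ..., I_r}, Q ∪ {J, I i})`
(which for `i = r` is `((P \ {T₁, T₂}) ∪ {H r}, Q ∪ {J, I r})`). -/
def SubresStep (PQ PQ' :
    Set (MvPolynomial (Fin n) K) × Set (MvPolynomial (Fin n) K)) : Prop :=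
  ∃ k : Fin n,
    (∃ T ∈ levelSet PQ.1 k, ∃ I R' : MvPolynomial (Fin n) K,
        psupp I ⊆ psupp T ∧ psupp R' ⊆ psupp T ∧
        PQ'.1 = (PQ.1 \ {T}) ∪ {I, R'} ∧ PQ'.2 = PQ.2) ∨
    (∃ T₁ T₂ : MvPolynomial (Fin n) K, T₁ ≠ T₂ ∧
        T₁ ∈ levelSet PQ.1 k ∧ T₂ ∈ levelSet PQ.1 k ∧
      ∃ (r : ℕ) (H I : ℕ → MvPolynomial (Fin n) K) (J : MvPolynomial (Fin n) K)
          (i : ℕ), 2 ≤ i ∧ i ≤ r ∧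
        (∀ m, 2 ≤ m → m ≤ r → psupp (H m) ⊆ psupp T₁ ∪ psupp T₂) ∧
        (∀ m, 2 ≤ m → m ≤ r → psupp (I m) ⊆ psupp (H m)) ∧
        psupp J ⊆ psupp T₂ ∧
        PQ'.1 = (PQ.1 \ {T₁, T₂}) ∪ {H i} ∪ (I '' {m | i < m ∧ m ≤ r}) ∧
        PQ'.2 = PQ.2 ∪ {J, I i})

lemma key_pair {K : Type*} [Field K] {n : ℕ}
    {Fs P : Set (MvPolynomial (Fin n) K)} (hpeo : isPEO Fs) (hP : subG P Fs)
    {k : Fin n} {T₁ T₂ : MvPolynomial (Fin n) K}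
    (h1 : T₁ ∈ levelSet P k) (h2 : T₂ ∈ levelSet P k) :
    ∀ p q : Fin n, p ≠ q → p ∈ psupp T₁ ∪ psupp T₂ → q ∈ psupp T₁ ∪ psupp T₂ →
      adjG Fs p q := by
  obtain ⟨hT1P, hk1, hle1⟩ := h1
  obtain ⟨hT2P, hk2, hle2⟩ := h2
  have same : ∀ (T : MvPolynomial (Fin n) K), T ∈ P → ∀ p q : Fin n, p ≠ q →
      p ∈ psupp T → q ∈ psupp T → adjG Fs p q := by
    intro T hT p q hne hp hq
    exact hP p q ⟨hne, T, hT, hp, hq⟩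
  have mixed : ∀ p q : Fin n, p ≠ q → p ∈ psupp T₁ → q ∈ psupp T₂ →
      adjG Fs p q := by
    intro p q hne hp hq
    rcases eq_or_lt_of_le (hle1 p hp) with hpk | hpk
    · exact same T₂ hT2P p q hne (hpk ▸ hk2) hq
    rcases eq_or_lt_of_le (hle2 q hq) with hqk | hqk
    · exact same T₁ hT1P p q hne hp (hqk ▸ hk1)
    exact hpeo p q k hpk hqk hne (same T₁ hT1P p k (ne_of_lt hpk) hp hk1)
      (same T₂ hT2P q k (ne_of_lt hqk) hq hk2)
  intro p q hne hp hq
  rcases hp with hp | hp <;> rcases hq with hq | hq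
  · exact same T₁ hT1P p q hne hp hq
  · exact mixed p q hne hp hq
  · exact adjG_symm (mixed q p hne.symm hq hp)
  · exact same T₂ hT2P p q hne hp hq

lemma step_preserve_s11 {K : Type*} [Field K] {n : ℕ}
    {Fs : Set (MvPolynomial (Fin n) K)} (hpeo : isPEO Fs)
    {c b : Set (MvPolynomial (Fin n) K) × Set (MvPolynomial (Fin n) K)}
    (hP : subG c.1 Fs) (hQ : subG c.2 Fs) (hstep : SubresStep c b) :
    subG b.1 Fs ∧ subG b.2 Fs := by
  obtain ⟨k, hcase⟩ := hstep
  rcases hcase with ⟨T, hT, I, R', hI, hR', hP', hQ'⟩ |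
    ⟨T₁, T₂, hne12, h1, h2, r, H, I, J, i, hi2, hir, hH, hIH, hJ, hP', hQ'⟩
  · constructor
    · intro p q ⟨hpq, F, hF, hp, hq⟩
      rw [hP'] at hF
      rcases hF with hF | hF
      · exact hP p q ⟨hpq, F, hF.1, hp, hq⟩
      · have hsub : psupp F ⊆ psupp T := by
          rcases hF with rfl | hF
          · exact hI
          · exact Set.mem_singleton_iff.mp hF ▸ hR'
        exact hP p q ⟨hpq, T, hT.1, hsub hp, hsub hq⟩
    · rw [hQ']; exact hQ
  · have key := key_pair hpeo hP h1 h2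
    constructor
    · intro p q ⟨hpq, F, hF, hp, hq⟩
      rw [hP'] at hF
      rcases hF with (hF | hF) | hF
      · exact hP p q ⟨hpq, F, hF.1, hp, hq⟩
      · have hsub : psupp F ⊆ psupp T₁ ∪ psupp T₂ :=
          Set.mem_singleton_iff.mp hF ▸ hH i hi2 hir
        exact key p q hpq (hsub hp) (hsub hq)
      · obtain ⟨m, ⟨him, hmr⟩, rfl⟩ := hF
        have hsub : psupp (I m) ⊆ psupp T₁ ∪ psupp T₂ :=
          (hIH m (le_trans hi2 (le_of_lt him)) hmr).trans
            (hH m (le_trans hi2 (le_of_lt him)) hmr)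
        exact key p q hpq (hsub hp) (hsub hq)
    · intro p q ⟨hpq, F, hF, hp, hq⟩
      rw [hQ'] at hF
      rcases hF with hF | hF
      · exact hQ p q ⟨hpq, F, hF, hp, hq⟩
      · have hsub : psupp F ⊆ psupp T₁ ∪ psupp T₂ := by
          rcases hF with rfl | hF
          · exact hJ.trans Set.subset_union_right
          · exact Set.mem_singleton_iff.mp hF ▸ (hIH i hi2 hir).trans (hH i hi2 hir)
        exact key p q hpq (hsub hp) (hsub hq)

/-- let `Fs` be a finite chordal polynomial set whose natural variable
ordering is a perfect elimination ordering.  Then every pair `(P, Q)` obtained from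
`(Fs, ∅)` by finitely many subresultant-based steps satisfies `G(P) ⊆ G(Fs)` and
`G(Q) ⊆ G(Fs)`. -/
theorem statement11 {K : Type*} [Field K] {n : ℕ}
    (Fs : Set (MvPolynomial (Fin n) K)) (hFfin : Fs.Finite) (hpeo : isPEO Fs)
    (P Q : Set (MvPolynomial (Fin n) K))
    (h : Relation.ReflTransGen SubresStep (Fs, ∅) (P, Q)) :
    subG P Fs ∧ subG Q Fs := by
  have main : ∀ b, Relation.ReflTransGen SubresStep (Fs, (∅ : Set (MvPolynomial (Fin n) K))) b →
      subG b.1 Fs ∧ subG b.2 Fs := by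
    intro b hb
    induction hb with
    | refl =>
      refine ⟨fun p q h => h, fun p q h => ?_⟩
      obtain ⟨_, F, hF, _⟩ := h
      exact absurd hF (Set.notMem_empty F)
    | tail _ hstep ih => exact step_preserve_s11 hpeo ih.1 ih.2 hstep
  exact main (P, Q) h
end

section
/- Let F be a finite chordal polynomial set in K[x_1,...,x_n] such that x_1 < ... < x_n is a perfect elimination ordering of G(F). Let P and Q be finite polynomial sets with G(P) ⊆ G(F) and G(Q) ⊆ G(F), let k be an index, and let T_1 ∈ Q^(k) and T_2 ∈ P^(k). Let N and N' be finite polynomial sets with supp(N) ⊆ supp(T_1) ∪ supp(T_2) and supp(N') ⊆ supp(T_1) ∪ supp(T_2). Then G((P \ {T_2}) ∪ N) ⊆ G(F) and G(Q ∪ N') ⊆ G(F). -/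
open MvPolynomial

variable {K : Type*} [Field K] {n : ℕ}

/-- let `Fs` be a finite chordal polynomial set whose natural variable
ordering is a perfect elimination ordering, and `P`, `Q` finite polynomial sets with
`G(P) ⊆ G(Fs)` and `G(Q) ⊆ G(Fs)`.  Let `T₁ ∈ Q^(k)` and `T₂ ∈ P^(k)`, and let
`N`, `N'` be finite polynomial sets with `supp N ⊆ supp T₁ ∪ supp T₂` and
`supp N' ⊆ supp T₁ ∪ supp T₂`.  Then `G((P \ {T₂}) ∪ N) ⊆ G(Fs)` and
`G(Q ∪ N') ⊆ G(Fs)`. -/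
theorem statement13 {K : Type*} [Field K] {n : ℕ}
    (Fs : Set (MvPolynomial (Fin n) K)) (hFfin : Fs.Finite) (hpeo : isPEO Fs)
    (P Q : Set (MvPolynomial (Fin n) K)) (hPfin : P.Finite) (hQfin : Q.Finite)
    (hPF : subG P Fs) (hQF : subG Q Fs)
    (k : Fin n) (T₁ T₂ : MvPolynomial (Fin n) K)
    (hT₁ : T₁ ∈ levelSet Q k) (hT₂ : T₂ ∈ levelSet P k)
    (N N' : Set (MvPolynomial (Fin n) K)) (hNfin : N.Finite) (hN'fin : N'.Finite)
    (hN : ssupp N ⊆ psupp T₁ ∪ psupp T₂) (hN' : ssupp N' ⊆ psupp T₁ ∪ psupp T₂) :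
    subG ((P \ {T₂}) ∪ N) Fs ∧ subG (Q ∪ N') Fs := by
  obtain ⟨hT₁Q, hkT₁, hleT₁⟩ := hT₁
  obtain ⟨hT₂P, hkT₂, hleT₂⟩ := hT₂
  -- key: two distinct variables in supp T₁ ∪ supp T₂ are adjacent in G(Fs)
  have key : ∀ p q : Fin n, p ≠ q → p ∈ psupp T₁ ∪ psupp T₂ →
      q ∈ psupp T₁ ∪ psupp T₂ → adjG Fs p q := by
    have same1 : ∀ p q : Fin n, p ≠ q → p ∈ psupp T₁ → q ∈ psupp T₁ → adjG Fs p q :=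
      fun p q hpq hp hq => hQF p q ⟨hpq, T₁, hT₁Q, hp, hq⟩
    have same2 : ∀ p q : Fin n, p ≠ q → p ∈ psupp T₂ → q ∈ psupp T₂ → adjG Fs p q :=
      fun p q hpq hp hq => hPF p q ⟨hpq, T₂, hT₂P, hp, hq⟩
    have mixed : ∀ p q : Fin n, p ≠ q → p ∈ psupp T₁ → q ∈ psupp T₂ → adjG Fs p q := by
      intro p q hpq hp hq
      rcases eq_or_lt_of_le (hleT₁ p hp) with hpk | hpk
      · exact same2 p q hpq (hpk ▸ hkT₂) hq
      rcases eq_or_lt_of_le (hleT₂ q hq) with hqk | hqk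
      · exact same1 p q hpq hp (hqk ▸ hkT₁)
      exact hpeo p q k hpk hqk hpq (same1 p k (ne_of_lt hpk) hp hkT₁)
        (same2 q k (ne_of_lt hqk) hq hkT₂)
    intro p q hpq hp hq
    rcases hp with hp | hp <;> rcases hq with hq | hq
    · exact same1 p q hpq hp hq
    · exact mixed p q hpq hp hq
    · exact ((mixed q p hpq.symm hq hp).2.imp fun F hF => ⟨hF.1, hF.2.2, hF.2.1⟩) |>
        (fun h => ⟨hpq, h⟩)
    · exact same2 p q hpq hp hq
  have fromN : ∀ (M : Set (MvPolynomial (Fin n) K)),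
      ssupp M ⊆ psupp T₁ ∪ psupp T₂ → ∀ p q, adjG M p q → adjG Fs p q := by
    intro M hM p q ⟨hpq, F, hFM, hp, hq⟩
    exact key p q hpq (hM (Set.mem_biUnion hFM hp)) (hM (Set.mem_biUnion hFM hq))
  constructor
  · rintro p q ⟨hpq, F, hF | hF, hp, hq⟩
    · exact hPF p q ⟨hpq, F, hF.1, hp, hq⟩
    · exact fromN N hN p q ⟨hpq, F, hF, hp, hq⟩
  · rintro p q ⟨hpq, F, hF | hF, hp, hq⟩
    · exact hQF p q ⟨hpq, F, hF, hp, hq⟩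
    · exact fromN N' hN' p q ⟨hpq, F, hF, hp, hq⟩
end

section
/- Let F be a finite chordal polynomial set in K[x_1,...,x_n] such that x_1 < ... < x_n is a perfect elimination ordering of G(F). Then every pair (P, Q) of finite polynomial sets obtained from the pair (F, ∅) by finitely many regular-decomposition steps satisfies G(P) ⊆ G(F) and G(Q) ⊆ G(F). -/
open MvPolynomial

variable {K : Type*} [Field K] {n : ℕ}

/-- A regular-decomposition step: transform a pair `(P, Q)` of polynomial sets, for
some index `k`, by one of the following branches.
(Right branch) choose `T ∈ P^(k)` and polynomials `I, R'` supported in `supp T`,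
and pass to `((P \ {T}) ∪ {I, R'}, Q)`.
(Subresultant branch) choose distinct `T₁, T₂ ∈ P^(k)`, polynomials `H_2, ..., H_r`
with `supp (H m) ⊆ supp T₁ ∪ supp T₂`, polynomials `I_2, ..., I_r` with
`supp (I m) ⊆ supp (H m)`, a polynomial `J` with `supp J ⊆ supp T₂`, and
`2 ≤ i ≤ r`, and pass to
`((P \ {T₁, T₂}) ∪ {H i, I_{i+1}, ..., I_r}, Q ∪ {J, I i})`.
(Mixed branch) choose `T₁ ∈ Q^(k)` and `T₂ ∈ P^(k)`, polynomials `H_2, ..., H_r`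
and `S_2, ..., S_r` with supports in `supp T₁ ∪ supp T₂`, polynomials
`I_2, ..., I_r` with `supp (I m) ⊆ supp (H m)`, and `2 ≤ i ≤ r`, and pass to
`((P \ {T₂}) ∪ {S i, I_{i+1}, ..., I_r}, Q ∪ {I i})`, or for `i = r` also possibly
to `((P \ {T₂}) ∪ {S r}, (Q \ {T₁}) ∪ {I r})`.
(Inequation branch) choose `Q₀ ∈ Q^(k)` and polynomials `I, R` supported in
`supp Q₀`, and pass to `(P ∪ {I}, (Q \ {Q₀}) ∪ {R})` or to `(P, Q ∪ {I})`. -/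
def RegStep (PQ PQ' :
    Set (MvPolynomial (Fin n) K) × Set (MvPolynomial (Fin n) K)) : Prop :=
  ∃ k : Fin n,
    (∃ T ∈ levelSet PQ.1 k, ∃ I R' : MvPolynomial (Fin n) K,
        psupp I ⊆ psupp T ∧ psupp R' ⊆ psupp T ∧
        PQ'.1 = (PQ.1 \ {T}) ∪ {I, R'} ∧ PQ'.2 = PQ.2) ∨
    (∃ T₁ T₂ : MvPolynomial (Fin n) K, T₁ ≠ T₂ ∧
        T₁ ∈ levelSet PQ.1 k ∧ T₂ ∈ levelSet PQ.1 k ∧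
      ∃ (r : ℕ) (H I : ℕ → MvPolynomial (Fin n) K) (J : MvPolynomial (Fin n) K)
          (i : ℕ), 2 ≤ i ∧ i ≤ r ∧
        (∀ m, 2 ≤ m → m ≤ r → psupp (H m) ⊆ psupp T₁ ∪ psupp T₂) ∧
        (∀ m, 2 ≤ m → m ≤ r → psupp (I m) ⊆ psupp (H m)) ∧
        psupp J ⊆ psupp T₂ ∧
        PQ'.1 = (PQ.1 \ {T₁, T₂}) ∪ {H i} ∪ (I '' {m | i < m ∧ m ≤ r}) ∧
        PQ'.2 = PQ.2 ∪ {J, I i}) ∨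
    (∃ T₁ T₂ : MvPolynomial (Fin n) K,
        T₁ ∈ levelSet PQ.2 k ∧ T₂ ∈ levelSet PQ.1 k ∧
      ∃ (r : ℕ) (H S I : ℕ → MvPolynomial (Fin n) K) (i : ℕ), 2 ≤ i ∧ i ≤ r ∧
        (∀ m, 2 ≤ m → m ≤ r → psupp (H m) ⊆ psupp T₁ ∪ psupp T₂) ∧
        (∀ m, 2 ≤ m → m ≤ r → psupp (S m) ⊆ psupp T₁ ∪ psupp T₂) ∧
        (∀ m, 2 ≤ m → m ≤ r → psupp (I m) ⊆ psupp (H m)) ∧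
        PQ'.1 = (PQ.1 \ {T₂}) ∪ {S i} ∪ (I '' {m | i < m ∧ m ≤ r}) ∧
        (PQ'.2 = PQ.2 ∪ {I i} ∨ (i = r ∧ PQ'.2 = (PQ.2 \ {T₁}) ∪ {I i}))) ∨
    (∃ Q₀ ∈ levelSet PQ.2 k, ∃ I R : MvPolynomial (Fin n) K,
        psupp I ⊆ psupp Q₀ ∧ psupp R ⊆ psupp Q₀ ∧
        ((PQ'.1 = PQ.1 ∪ {I} ∧ PQ'.2 = (PQ.2 \ {Q₀}) ∪ {R}) ∨
         (PQ'.1 = PQ.1 ∧ PQ'.2 = PQ.2 ∪ {I})))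

/-- Auxiliary: the support is a clique in `G(Fs)`. -/
def cliqueIn {K : Type*} [Field K] {n : ℕ} (Fs : Set (MvPolynomial (Fin n) K))
    (S : Set (Fin n)) : Prop :=
  ∀ p ∈ S, ∀ q ∈ S, p ≠ q → adjG Fs p q

lemma cliqueIn_mono {K : Type*} [Field K] {n : ℕ} {Fs : Set (MvPolynomial (Fin n) K)}
    {S T : Set (Fin n)} (h : S ⊆ T) (hT : cliqueIn Fs T) : cliqueIn Fs S :=
  fun p hp q hq hpq => hT p (h hp) q (h hq) hpq

lemma cliqueIn_union {K : Type*} [Field K] {n : ℕ} {Fs : Set (MvPolynomial (Fin n) K)}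
    (hpeo : isPEO Fs) {T₁ T₂ : MvPolynomial (Fin n) K} {k : Fin n}
    (h1 : hasLv T₁ k) (h2 : hasLv T₂ k)
    (c1 : cliqueIn Fs (psupp T₁)) (c2 : cliqueIn Fs (psupp T₂)) :
    cliqueIn Fs (psupp T₁ ∪ psupp T₂) := by
  have key : ∀ (A B : MvPolynomial (Fin n) K), hasLv A k → hasLv B k →
      cliqueIn Fs (psupp A) → cliqueIn Fs (psupp B) →
      ∀ p ∈ psupp A, ∀ q ∈ psupp B, p ≠ q → adjG Fs p q := by
    intro A B hA hB cA cB p hp q hq hpq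
    by_cases hpk : p = k
    · subst hpk; exact cB p hB.1 q hq hpq
    by_cases hqk : q = k
    · subst hqk; exact cA p hp q hA.1 hpq
    have hpl : p < k := lt_of_le_of_ne (hA.2 p hp) hpk
    have hql : q < k := lt_of_le_of_ne (hB.2 q hq) hqk
    exact hpeo p q k hpl hql hpq (cA p hp k hA.1 hpk) (cB q hq k hB.1 hqk)
  intro p hp q hq hpq
  rcases hp with hp | hp <;> rcases hq with hq | hq
  · exact c1 p hp q hq hpq
  · exact key T₁ T₂ h1 h2 c1 c2 p hp q hq hpq
  · exact key T₂ T₁ h2 h1 c2 c1 p hp q hq hpq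
  · exact c2 p hp q hq hpq

/-- The invariant: every polynomial of `P ∪ Q` has clique support. -/
def CliqueInv {K : Type*} [Field K] {n : ℕ} (Fs : Set (MvPolynomial (Fin n) K))
    (PQ : Set (MvPolynomial (Fin n) K) × Set (MvPolynomial (Fin n) K)) : Prop :=
  ∀ F ∈ PQ.1 ∪ PQ.2, cliqueIn Fs (psupp F)

lemma cliqueInv_step {K : Type*} [Field K] {n : ℕ} {Fs : Set (MvPolynomial (Fin n) K)}
    (hpeo : isPEO Fs) {PQ PQ' :
      Set (MvPolynomial (Fin n) K) × Set (MvPolynomial (Fin n) K)}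
    (hstep : RegStep PQ PQ') (hinv : CliqueInv Fs PQ) : CliqueInv Fs PQ' := by
  obtain ⟨k, hbr⟩ := hstep
  have hP : ∀ F ∈ PQ.1, cliqueIn Fs (psupp F) := fun F hF => hinv F (Or.inl hF)
  have hQ : ∀ F ∈ PQ.2, cliqueIn Fs (psupp F) := fun F hF => hinv F (Or.inr hF)
  rcases hbr with ⟨T, hT, I, R', hI, hR', e1, e2⟩ |
    ⟨T₁, T₂, hne, hT₁, hT₂, r, H, I, J, i, hi2, hir, hH, hIH, hJ, e1, e2⟩ |
    ⟨T₁, T₂, hT₁, hT₂, r, H, S, I, i, hi2, hir, hH, hS, hIH, e1, e2⟩ |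
    ⟨Q₀, hQ₀, I, R, hI, hR, hcase⟩
  · -- right branch
    have cT := hP T hT.1
    intro F hF
    rw [e1, e2] at hF
    simp only [Set.mem_union, Set.mem_diff, Set.mem_insert_iff, Set.mem_singleton_iff,
      Set.mem_image, Set.mem_setOf_eq] at hF
    rcases hF with (⟨hF, -⟩ | hF | hF) | hF
    · exact hP F hF
    · exact cliqueIn_mono (hF ▸ hI) cT
    · exact cliqueIn_mono (hF ▸ hR') cT
    · exact hQ F hF
  · -- subresultant branch
    have c1 := hP T₁ hT₁.1
    have c2 := hP T₂ hT₂.1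
    have cu := cliqueIn_union hpeo hT₁.2 hT₂.2 c1 c2
    have cH : ∀ m, 2 ≤ m → m ≤ r → cliqueIn Fs (psupp (H m)) :=
      fun m a b => cliqueIn_mono (hH m a b) cu
    have cI : ∀ m, 2 ≤ m → m ≤ r → cliqueIn Fs (psupp (I m)) :=
      fun m a b => cliqueIn_mono (hIH m a b) (cH m a b)
    intro F hF
    rw [e1, e2] at hF
    simp only [Set.mem_union, Set.mem_diff, Set.mem_insert_iff, Set.mem_singleton_iff,
      Set.mem_image, Set.mem_setOf_eq] at hF
    rcases hF with ((⟨hF, -⟩ | hF) | ⟨m, ⟨hm1, hm2⟩, hFm⟩) | (hF | hF | hF)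
    · exact hP F hF
    · exact hF ▸ cH i hi2 hir
    · exact hFm ▸ cI m (le_trans hi2 (le_of_lt hm1)) hm2
    · exact hQ F hF
    · exact cliqueIn_mono (hF ▸ hJ) c2
    · exact hF ▸ cI i hi2 hir
  · -- mixed branch
    have c1 := hQ T₁ hT₁.1
    have c2 := hP T₂ hT₂.1
    have cu := cliqueIn_union hpeo hT₁.2 hT₂.2 c1 c2
    have cS : ∀ m, 2 ≤ m → m ≤ r → cliqueIn Fs (psupp (S m)) :=
      fun m a b => cliqueIn_mono (hS m a b) cu
    have cI : ∀ m, 2 ≤ m → m ≤ r → cliqueIn Fs (psupp (I m)) :=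
      fun m a b => cliqueIn_mono (le_trans (hIH m a b) (hH m a b)) cu
    intro F hF
    rcases hF with hF | hF
    · rw [e1] at hF
      simp only [Set.mem_union, Set.mem_diff, Set.mem_insert_iff, Set.mem_singleton_iff,
        Set.mem_image, Set.mem_setOf_eq] at hF
      rcases hF with (⟨hF, -⟩ | hF) | ⟨m, ⟨hm1, hm2⟩, hFm⟩
      · exact hP F hF
      · exact hF ▸ cS i hi2 hir
      · exact hFm ▸ cI m (le_trans hi2 (le_of_lt hm1)) hm2
    · rcases e2 with e2 | ⟨_, e2⟩ <;> rw [e2] at hF <;>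
        simp only [Set.mem_union, Set.mem_diff, Set.mem_singleton_iff] at hF
      · rcases hF with hF | hF
        · exact hQ F hF
        · exact hF ▸ cI i hi2 hir
      · rcases hF with ⟨hF, -⟩ | hF
        · exact hQ F hF
        · exact hF ▸ cI i hi2 hir
  · -- inequation branch
    have cQ₀ := hQ Q₀ hQ₀.1
    intro F hF
    rcases hcase with ⟨e1, e2⟩ | ⟨e1, e2⟩ <;> rw [e1, e2] at hF <;>
      simp only [Set.mem_union, Set.mem_diff, Set.mem_singleton_iff] at hF
    · rcases hF with (hF | hF) | (⟨hF, -⟩ | hF)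
      · exact hP F hF
      · exact cliqueIn_mono (hF ▸ hI) cQ₀
      · exact hQ F hF
      · exact cliqueIn_mono (hF ▸ hR) cQ₀
    · rcases hF with hF | (hF | hF)
      · exact hP F hF
      · exact hQ F hF
      · exact cliqueIn_mono (hF ▸ hI) cQ₀

/-- let `Fs` be a finite chordal polynomial set whose natural variable
ordering is a perfect elimination ordering.  Then every pair `(P, Q)` obtained from
`(Fs, ∅)` by finitely many regular-decomposition steps satisfies `G(P) ⊆ G(Fs)`
and `G(Q) ⊆ G(Fs)`. -/
theorem statement14 {K : Type*} [Field K] {n : ℕ}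
    (Fs : Set (MvPolynomial (Fin n) K)) (hFfin : Fs.Finite) (hpeo : isPEO Fs)
    (P Q : Set (MvPolynomial (Fin n) K))
    (h : Relation.ReflTransGen RegStep (Fs, ∅) (P, Q)) :
    subG P Fs ∧ subG Q Fs := by
  have hinv : CliqueInv Fs (P, Q) := by
    have : ∀ PQ, Relation.ReflTransGen RegStep (Fs, (∅ : Set (MvPolynomial (Fin n) K))) PQ → CliqueInv Fs PQ := by
      intro PQ hPQ
      induction hPQ with
      | refl =>
        intro F hF
        rcases hF with hF | hF
        · exact fun p hp q hq hpq => ⟨hpq, F, hF, hp, hq⟩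
        · exact absurd hF (Set.notMem_empty F)
      | tail _ hstep ih => exact cliqueInv_step hpeo hstep ih
    exact this (P, Q) h
  constructor
  · intro p q ⟨hpq, F, hF, hp, hq⟩
    exact hinv F (Or.inl hF) p hp q hq hpq
  · intro p q ⟨hpq, F, hF, hp, hq⟩
    exact hinv F (Or.inr hF) p hp q hq hpq
end
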